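/- For r ≥ 0 set a₀ = 1, a₁ = 4r²+6, a₂ = 3r⁴+23r²+5, a₃ = 11r⁴+28r², a₄ = 3r⁶+19r⁴+10r², a₅ = r⁶+5r⁴, and define the Hurwitz determinants A₁ = a₁, A₂ = det [[a₁, a₀],[a₃, a₂]], A₃ = det [[a₁, a₀, 0],[a₃, a₂, a₁],[a₅, a₄, a₃]], A₄ = det [[a₁, a₀, 0, 0],[a₃, a₂, a₁, 0],[a₅, a₄, a₃, 0],[0, 0, a₅, a₄]]. Then A₁ = 4r²+6, A₂ = 12r⁶+99r⁴+130r²+30, A₃ = 84r¹⁰+981r⁸+3048r⁶+2836r⁴+480r², A₄ = 252r¹⁶+4539r¹⁴+28623r¹²+76230r¹⁰+85804r⁸+37480r⁶+4800r⁴; in particular A₁ > 0 for all r ≥ 0, and A₂, A₃, A₄ > 0 for all r > 0. -/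

import Mathlib

noncomputable section

/-- `a₀ = 1`. -/
def a0 (_r : ℝ) : ℝ := 1
/-- `a₁ = 4r² + 6`. -/
def a1 (r : ℝ) : ℝ := 4*r^2 + 6
/-- `a₂ = 3r⁴ + 23r² + 5`. -/
def a2 (r : ℝ) : ℝ := 3*r^4 + 23*r^2 + 5
/-- `a₃ = 11r⁴ + 28r²`. -/
def a3 (r : ℝ) : ℝ := 11*r^4 + 28*r^2
/-- `a₄ = 3r⁶ + 19r⁴ + 10r²`. -/
def a4 (r : ℝ) : ℝ := 3*r^6 + 19*r^4 + 10*r^2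
/-- `a₅ = r⁶ + 5r⁴`. -/
def a5 (r : ℝ) : ℝ := r^6 + 5*r^4

/-- First Hurwitz determinant. -/
def A1 (r : ℝ) : ℝ := a1 r
/-- Second Hurwitz determinant. -/
def A2 (r : ℝ) : ℝ := (!![a1 r, a0 r; a3 r, a2 r]).det
/-- Third Hurwitz determinant. -/
def A3 (r : ℝ) : ℝ := (!![a1 r, a0 r, 0; a3 r, a2 r, a1 r; a5 r, a4 r, a3 r]).det
/-- Fourth Hurwitz determinant. -/
def A4 (r : ℝ) : ℝ :=
  (!![a1 r, a0 r, 0,    0;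
      a3 r, a2 r, a1 r, 0;
      a5 r, a4 r, a3 r, 0;
      0,    0,    a5 r, a4 r]).det

/-- **Hurwitz determinants of the characteristic quintic** (proof of Lemma 3.3):
explicit values of `A₁, A₂, A₃, A₄`, and their positivity. -/
theorem hurwitz_determinants (r : ℝ) :
    A1 r = 4*r^2 + 6 ∧
    A2 r = 12*r^6 + 99*r^4 + 130*r^2 + 30 ∧
    A3 r = 84*r^10 + 981*r^8 + 3048*r^6 + 2836*r^4 + 480*r^2 ∧
    A4 r = 252*r^16 + 4539*r^14 + 28623*r^12 + 76230*r^10 + 85804*r^8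
            + 37480*r^6 + 4800*r^4 ∧
    (0 ≤ r → 0 < A1 r) ∧
    (0 < r → 0 < A2 r ∧ 0 < A3 r ∧ 0 < A4 r) := by

  have h1 : A1 r = 4*r^2 + 6 := rfl
  have h2 : A2 r = 12*r^6 + 99*r^4 + 130*r^2 + 30 := by
    simp [A2, Matrix.det_fin_two_of, a0, a1, a2, a3]; ring
  have h3 : A3 r = 84*r^10 + 981*r^8 + 3048*r^6 + 2836*r^4 + 480*r^2 := by
    simp [A3, Matrix.det_fin_three, a0, a1, a2, a3, a4, a5]; ring
  have h4 : A4 r = 252*r^16 + 4539*r^14 + 28623*r^12 + 76230*r^10 + 85804*r^8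
            + 37480*r^6 + 4800*r^4 := by
    simp [A4, Matrix.det_succ_row_zero, Fin.sum_univ_succ, Matrix.submatrix, Fin.succAbove,
      Matrix.det_fin_three, a0, a1, a2, a3, a4, a5]; ring
  refine ⟨h1, h2, h3, h4, fun _ => by rw [h1]; positivity, fun hr => ⟨?_, ?_, ?_⟩⟩
  · rw [h2]; positivity
  · rw [h3]; positivity
  · rw [h4]; positivity
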